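/- For any Young diagram λ, the squares that can be added to λ and the squares that can be removed from λ are perfectly interleaved when ordered by the diagonal j−i containing them: between any two consecutive addable squares there is exactly one removable square, all addable and removable squares lie on distinct diagonals, and the extreme (leftmost and rightmost) ones are addable. -/

import Mathlib

open scoped Classical

/-- The diagonal `j - i` of the square `(i, j)`. -/
def diagOf (c : ℕ × ℕ) : ℤ := (c.2 : ℤ) - (c.1 : ℤ)

/-- The square `c` can be added to `μ`, yielding a Young diagram. -/
def Addable (μ : YoungDiagram) (c : ℕ × ℕ) : Prop :=
  c ∉ μ ∧ ∃ ν : YoungDiagram, ν.cells = insert c μ.cells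

/-- The square `c` can be removed from `μ`, yielding a Young diagram. -/
def Removable (μ : YoungDiagram) (c : ℕ × ℕ) : Prop :=
  c ∈ μ ∧ ∃ ν : YoungDiagram, ν.cells = μ.cells.erase c

lemma addable_iff (μ : YoungDiagram) (i j : ℕ) :
    Addable μ (i, j) ↔ j = μ.rowLen i ∧ (i = 0 ∨ μ.rowLen i < μ.rowLen (i - 1)) := by
  constructor
  · rintro ⟨hnm, ν, hν⟩
    have hmemν : ∀ c : ℕ × ℕ, c ∈ ν ↔ c = (i, j) ∨ c ∈ μ := by
      intro c
      rw [← YoungDiagram.mem_cells, hν, Finset.mem_insert, YoungDiagram.mem_cells]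
    have hle : μ.rowLen i ≤ j := by
      by_contra h
      exact hnm (YoungDiagram.mem_iff_lt_rowLen.2 (by omega))
    have hge : j ≤ μ.rowLen i := by
      rcases Nat.eq_zero_or_pos j with rfl | hj
      · omega
      · have : (i, j - 1) ∈ ν := ν.isLowerSet (Prod.mk_le_mk.2 ⟨le_refl _, by omega⟩)
          ((hmemν (i, j)).2 (Or.inl rfl))
        rcases (hmemν _).1 this with h | h
        · simp at h; omega
        · have := YoungDiagram.mem_iff_lt_rowLen.1 h; omega
    have hj' : j = μ.rowLen i := le_antisymm hge hle
    refine ⟨hj', ?_⟩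
    rcases Nat.eq_zero_or_pos i with rfl | hi
    · exact Or.inl rfl
    · right
      have : (i - 1, j) ∈ ν := ν.isLowerSet (Prod.mk_le_mk.2 ⟨by omega, le_refl _⟩)
        ((hmemν (i, j)).2 (Or.inl rfl))
      rcases (hmemν _).1 this with h | h
      · simp at h; omega
      · have := YoungDiagram.mem_iff_lt_rowLen.1 h; omega
  · rintro ⟨rfl, hcond⟩
    refine ⟨by simp [YoungDiagram.mem_iff_lt_rowLen], ?_⟩
    refine ⟨⟨insert (i, μ.rowLen i) μ.cells, ?_⟩, rfl⟩
    intro x y hxy hx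
    simp only [Finset.coe_insert, Set.mem_insert_iff, Finset.mem_coe,
      YoungDiagram.mem_cells] at hx ⊢
    rcases hx with rfl | hx
    · obtain ⟨y1, y2⟩ := y
      obtain ⟨h1, h2⟩ := Prod.mk_le_mk.1 hxy
      rcases Nat.lt_or_ge y1 i with hlt | hge
      · right
        have hi0 : i ≠ 0 := by omega
        have hr : μ.rowLen i < μ.rowLen (i - 1) := by tauto
        have : μ.rowLen (i - 1) ≤ μ.rowLen y1 := μ.rowLen_anti _ _ (by omega)
        exact YoungDiagram.mem_iff_lt_rowLen.2 (by omega)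
      · have hy1 : y1 = i := le_antisymm h1 hge
        rcases Nat.lt_or_ge y2 (μ.rowLen i) with h | h
        · exact Or.inr (YoungDiagram.mem_iff_lt_rowLen.2 (by rw [hy1]; exact h))
        · left; simp only [Prod.mk.injEq]; omega
    · exact Or.inr (μ.isLowerSet hxy hx)

lemma removable_iff (μ : YoungDiagram) (i j : ℕ) :
    Removable μ (i, j) ↔ j + 1 = μ.rowLen i ∧ μ.rowLen (i + 1) < μ.rowLen i := by
  constructor
  · rintro ⟨hm, ν, hν⟩
    have hmemν : ∀ c : ℕ × ℕ, c ∈ ν ↔ c ∈ μ ∧ c ≠ (i, j) := by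
      intro c
      rw [← YoungDiagram.mem_cells, hν, Finset.mem_erase, YoungDiagram.mem_cells, and_comm]
    have hjlt : j < μ.rowLen i := YoungDiagram.mem_iff_lt_rowLen.1 hm
    have hself : (i, j) ∉ ν := by rw [hmemν]; simp
    have h1 : j + 1 = μ.rowLen i := by
      by_contra h
      have hmem : (i, j + 1) ∈ μ := YoungDiagram.mem_iff_lt_rowLen.2 (by omega)
      have : (i, j + 1) ∈ ν := (hmemν _).2 ⟨hmem, by simp⟩
      exact hself (ν.isLowerSet (by simp [Prod.mk_le_mk]) this)
    refine ⟨h1, ?_⟩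
    by_contra h
    have hmem : (i + 1, j) ∈ μ := YoungDiagram.mem_iff_lt_rowLen.2 (by
      have := μ.rowLen_anti i (i + 1) (by omega); omega)
    have : (i + 1, j) ∈ ν := (hmemν _).2 ⟨hmem, by simp⟩
    exact hself (ν.isLowerSet (by simp [Prod.mk_le_mk]) this)
  · rintro ⟨h1, h2⟩
    have hm : (i, j) ∈ μ := YoungDiagram.mem_iff_lt_rowLen.2 (by omega)
    refine ⟨hm, ⟨⟨μ.cells.erase (i, j), ?_⟩, rfl⟩⟩
    intro x y hxy hx
    simp only [Finset.coe_erase, Set.mem_diff, Finset.mem_coe, YoungDiagram.mem_cells,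
      Set.mem_singleton_iff] at hx ⊢
    obtain ⟨hxμ, hxne⟩ := hx
    refine ⟨μ.isLowerSet hxy hxμ, ?_⟩
    intro hyeq
    obtain ⟨x1, x2⟩ := x
    obtain ⟨y1, y2⟩ := y
    simp only [Prod.mk.injEq] at hyeq
    obtain ⟨he1, he2⟩ := hyeq
    obtain ⟨hl1, hl2⟩ := Prod.mk_le_mk.1 hxy
    have hx2 : x2 < μ.rowLen x1 := YoungDiagram.mem_iff_lt_rowLen.1 hxμ
    have hrx : μ.rowLen x1 ≤ μ.rowLen i := μ.rowLen_anti _ _ (by omega)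
    rcases Nat.lt_or_ge x1 (i + 1) with h | h
    · have hx1 : x1 = i := by omega
      apply hxne
      subst hx1
      simp only [Prod.mk.injEq]
      exact ⟨trivial, by omega⟩
    · have : μ.rowLen x1 ≤ μ.rowLen (i + 1) := μ.rowLen_anti _ _ h
      omega

/-- The diagonal of row `i`'s first missing square. -/
def rowDiag (μ : YoungDiagram) (i : ℕ) : ℤ := (μ.rowLen i : ℤ) - (i : ℤ)

lemma rowDiag_strictAnti (μ : YoungDiagram) : StrictAnti (rowDiag μ) := by
  intro a b hab
  have := μ.rowLen_anti a b (le_of_lt hab)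
  unfold rowDiag
  omega

lemma diag_addable {μ : YoungDiagram} {c : ℕ × ℕ} (h : Addable μ c) :
    diagOf c = rowDiag μ c.1 := by
  obtain ⟨i, j⟩ := c
  obtain ⟨hj, -⟩ := (addable_iff μ i j).1 h
  simp [diagOf, rowDiag, hj]

lemma diag_removable {μ : YoungDiagram} {c : ℕ × ℕ} (h : Removable μ c) :
    diagOf c = rowDiag μ c.1 - 1 := by
  obtain ⟨i, j⟩ := c
  obtain ⟨hj, -⟩ := (removable_iff μ i j).1 h
  simp only [diagOf, rowDiag]
  omega

lemma addable_succ_of_removable {μ : YoungDiagram} {i j : ℕ} (h : Removable μ (i, j)) :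
    Addable μ (i + 1, μ.rowLen (i + 1)) := by
  obtain ⟨h1, h2⟩ := (removable_iff μ i j).1 h
  exact (addable_iff μ (i + 1) _).2 ⟨rfl, Or.inr (by simpa using h2)⟩

/-- Addable and removable squares of a Young diagram lie on distinct diagonals and are
perfectly interleaved, with addable squares at both extremes. -/
theorem stmt1 (μ : YoungDiagram) :
    Set.InjOn diagOf {c | Addable μ c} ∧
    Set.InjOn diagOf {c | Removable μ c} ∧
    (∀ a b, Addable μ a → Removable μ b → diagOf a ≠ diagOf b) ∧
    (∀ a b, Addable μ a → Addable μ b → diagOf a < diagOf b →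
      (∀ c, Addable μ c → ¬(diagOf a < diagOf c ∧ diagOf c < diagOf b)) →
      ∃! k : ℤ, (∃ c, Removable μ c ∧ diagOf c = k) ∧ diagOf a < k ∧ k < diagOf b) ∧
    (∀ b, Removable μ b →
      (∃ a, Addable μ a ∧ diagOf a < diagOf b) ∧ (∃ a, Addable μ a ∧ diagOf b < diagOf a)) := by
  have hD := rowDiag_strictAnti μ
  have hDinj : Function.Injective (rowDiag μ) := hD.injective
  refine ⟨?_, ?_, ?_, ?_, ?_⟩
  · -- InjOn on addables
    rintro ⟨i, j⟩ ha ⟨i', j'⟩ hb hd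
    simp only [Set.mem_setOf_eq] at ha hb
    rw [diag_addable ha, diag_addable hb] at hd
    have hi : i = i' := hDinj hd
    subst hi
    have := ((addable_iff μ i j).1 ha).1
    have := ((addable_iff μ i j').1 hb).1
    simp_all
  · -- InjOn on removables
    rintro ⟨i, j⟩ ha ⟨i', j'⟩ hb hd
    simp only [Set.mem_setOf_eq] at ha hb
    rw [diag_removable ha, diag_removable hb] at hd
    simp only at hd
    have hi : i = i' := hDinj (by omega)
    subst hi
    have h1 := ((removable_iff μ i j).1 ha).1
    have h2 := ((removable_iff μ i j').1 hb).1
    simp only [Prod.mk.injEq]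
    exact ⟨trivial, by omega⟩
  · -- addable and removable diagonals distinct
    rintro ⟨i, j⟩ ⟨i', j'⟩ ha hb hd
    rw [diag_addable ha, diag_removable hb] at hd
    simp only at hd
    -- rowDiag i = rowDiag i' - 1 < rowDiag i', so i' < i, so i ≥ i' + 1
    have hi : i' < i := hD.lt_iff_gt.1 (by omega)
    have h1 : rowDiag μ i ≤ rowDiag μ (i' + 1) := hD.antitone (by omega)
    obtain ⟨-, h2⟩ := (removable_iff μ i' j').1 hb
    have : rowDiag μ (i' + 1) ≤ rowDiag μ i' - 2 := by
      unfold rowDiag; push_cast; omega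
    omega
  · -- interleaving
    rintro ⟨ia, ja⟩ ⟨ib, jb⟩ ha hb hlt hnone
    rw [diag_addable ha, diag_addable hb] at hlt ⊢
    simp only at hlt ⊢
    have hrow : ib < ia := hD.lt_iff_gt.1 hlt
    obtain ⟨hja, hcond⟩ := (addable_iff μ ia ja).1 ha
    have hia0 : ia ≠ 0 := by omega
    have hremlen : μ.rowLen ia < μ.rowLen (ia - 1) := by tauto
    have hrem : Removable μ (ia - 1, μ.rowLen (ia - 1) - 1) := by
      rw [removable_iff]
      constructor
      · omega
      · have : ia - 1 + 1 = ia := by omega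
        rw [this]; exact hremlen
    refine ⟨rowDiag μ (ia - 1) - 1, ⟨⟨_, hrem, diag_removable hrem⟩, ?_, ?_⟩, ?_⟩
    · -- rowDiag ia < rowDiag (ia-1) - 1
      have : (μ.rowLen ia : ℤ) < μ.rowLen (ia - 1) := by exact_mod_cast hremlen
      unfold rowDiag
      have hcast : ((ia - 1 : ℕ) : ℤ) = (ia : ℤ) - 1 := by omega
      rw [hcast]; omega
    · -- rowDiag (ia-1) - 1 < rowDiag ib
      have : rowDiag μ (ia - 1) ≤ rowDiag μ ib := hD.antitone (by omega)
      omega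
    · -- uniqueness
      rintro k ⟨⟨⟨i, j⟩, hc, rfl⟩, hk1, hk2⟩
      rw [diag_removable hc] at hk1 hk2 ⊢
      simp only at hk1 hk2 ⊢
      obtain ⟨hj1, hj2⟩ := (removable_iff μ i j).1 hc
      -- row i+1 is addable
      have hadd : Addable μ (i + 1, μ.rowLen (i + 1)) := addable_succ_of_removable hc
      have hi_lt : i < ia := hD.lt_iff_gt.1 (by omega)
      have hd1 : rowDiag μ (i + 1) ≤ rowDiag μ i - 2 := by
        unfold rowDiag; push_cast; omega
      have hge : rowDiag μ ia ≤ rowDiag μ (i + 1) := hD.antitone (by omega)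
      have hub : rowDiag μ (i + 1) < rowDiag μ ib := by omega
      have := hnone _ hadd
      rw [diag_addable ha, diag_addable hadd, diag_addable hb] at this
      simp only at this
      have heq : rowDiag μ (i + 1) = rowDiag μ ia := by
        rcases lt_or_eq_of_le hge with h | h
        · exact absurd ⟨h, hub⟩ this
        · omega
      have : i + 1 = ia := hDinj heq
      have : i = ia - 1 := by omega
      subst this
      omega
  · -- extremes
    rintro ⟨i, j⟩ hb
    obtain ⟨hj1, hj2⟩ := (removable_iff μ i j).1 hb
    constructor
    · -- an addable square with smaller diagonal: row i+1
      have hadd : Addable μ (i + 1, μ.rowLen (i + 1)) := addable_succ_of_removable hb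
      refine ⟨_, hadd, ?_⟩
      rw [diag_addable hadd, diag_removable hb]
      simp only
      unfold rowDiag; push_cast; omega
    · -- an addable square with larger diagonal: first row with same length
      have hex : ∃ t, μ.rowLen t ≤ μ.rowLen i := ⟨i, le_refl _⟩
      set j0 := Nat.find hex with hj0def
      have hspec : μ.rowLen j0 ≤ μ.rowLen i := Nat.find_spec hex
      have hj0le : j0 ≤ i := Nat.find_le (le_refl _)
      have heq : μ.rowLen j0 = μ.rowLen i :=
        le_antisymm hspec (μ.rowLen_anti _ _ hj0le)
      have hadd : Addable μ (j0, μ.rowLen j0) := by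
        rw [addable_iff]
        refine ⟨rfl, ?_⟩
        rcases Nat.eq_zero_or_pos j0 with h | h
        · exact Or.inl h
        · right
          have := Nat.find_min hex (m := j0 - 1) (by omega)
          omega
      refine ⟨_, hadd, ?_⟩
      rw [diag_addable hadd, diag_removable hb]
      simp only
      unfold rowDiag
      have : (j0 : ℤ) ≤ (i : ℤ) := by exact_mod_cast hj0le
      omega
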